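/- Let α and γ be finite types and let T be a row-stochastic matrix on α ⊕ γ such that every state Sum.inl a is absorbing, and suppose det (1 - S2) ≠ 0. Then there exists a unique matrix P : (α ⊕ γ) → α → ℝ satisfying (i) P (Sum.inl a) a' = 1 if a = a' and 0 otherwise, and (ii) ∑ s', T s s' * P s' a = P s a for all states s and all a : α; moreover this P is given by Cramer's rule as P s a = - det (M.updateColumn s e) / det M, where e : α ⊕ γ → ℝ is the standard basis vector supported at Sum.inl a (e x = 1 if x = Sum.inl a, else 0) and M.updateColumn s e replaces the column of M indexed by s with e. -/

import Mathlib

theorem fixation_probability_formula {α γ : Type*} [Fintype α] [Fintype γ]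
    [DecidableEq α] [DecidableEq γ]
    (T : Matrix (α ⊕ γ) (α ⊕ γ) ℝ)
    (hT0 : ∀ s s', 0 ≤ T s s') (hT1 : ∀ s, ∑ s', T s s' = 1)
    (habs : ∀ (a : α) (s' : α ⊕ γ),
      T (Sum.inl a) s' = if s' = Sum.inl a then 1 else 0)
    (S1 : Matrix γ α ℝ) (hS1 : S1 = Matrix.of fun b a => T (Sum.inr b) (Sum.inl a))
    (S2 : Matrix γ γ ℝ) (hS2 : S2 = Matrix.of fun b b' => T (Sum.inr b) (Sum.inr b'))
    (M : Matrix (α ⊕ γ) (α ⊕ γ) ℝ) (hM : M = -Matrix.fromBlocks 1 0 S1 (S2 - 1))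
    (hdet : Matrix.det (1 - S2) ≠ 0) :
    (∃! P : (α ⊕ γ) → α → ℝ,
      (∀ a a' : α, P (Sum.inl a) a' = if a = a' then 1 else 0) ∧
      (∀ (s : α ⊕ γ) (a : α), ∑ s', T s s' * P s' a = P s a)) ∧
    (∀ P : (α ⊕ γ) → α → ℝ,
      ((∀ a a' : α, P (Sum.inl a) a' = if a = a' then 1 else 0) ∧
       (∀ (s : α ⊕ γ) (a : α), ∑ s', T s s' * P s' a = P s a)) →
      ∀ (s : α ⊕ γ) (a : α),
        P s a = - Matrix.det (M.updateCol s fun x => if x = Sum.inl a then 1 else 0)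
          / Matrix.det M) := by
  classical
  have hdetS : (S2 - 1 : Matrix γ γ ℝ).det ≠ 0 := by
    have h : (S2 - 1 : Matrix γ γ ℝ) = -(1 - S2) := by rw [neg_sub]
    rw [h, Matrix.det_neg]
    intro hc
    rcases mul_eq_zero.mp hc with h1 | h1
    · exact pow_ne_zero _ (by norm_num) h1
    · exact hdet h1
  have hdetM : M.det ≠ 0 := by
    rw [hM, Matrix.det_neg, Matrix.det_fromBlocks_zero₁₂]
    intro hc
    rcases mul_eq_zero.mp hc with h1 | h1
    · exact pow_ne_zero _ (by norm_num) h1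
    · rw [Matrix.det_one, one_mul] at h1
      exact hdetS h1
  have hU : IsUnit M.det := isUnit_iff_ne_zero.mpr hdetM
  -- key equivalence
  have key : ∀ P : (α ⊕ γ) → α → ℝ,
      ((∀ a a' : α, P (Sum.inl a) a' = if a = a' then 1 else 0) ∧
       (∀ (s : α ⊕ γ) (a : α), ∑ s', T s s' * P s' a = P s a)) ↔
      (∀ a, M.mulVec (fun s => P s a) =
        fun x => -(if x = Sum.inl a then (1:ℝ) else 0)) := by
    intro P
    constructor
    · rintro ⟨h1, h2⟩ a
      funext x
      rw [hM]
      cases x with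
      | inl a' =>
        simp only [Matrix.neg_mulVec, Pi.neg_apply, neg_inj]
        have : ((Matrix.fromBlocks (1 : Matrix α α ℝ) (0 : Matrix α γ ℝ) S1 (S2 - 1)).mulVec fun s => P s a) (Sum.inl a')
            = P (Sum.inl a') a := by
          simp [Matrix.mulVec, dotProduct, Fintype.sum_sum_type,
            Matrix.fromBlocks, Matrix.one_apply, ite_mul, Finset.sum_ite_eq]
        rw [this, h1]
        simp [eq_comm]
      | inr b =>
        simp only [Matrix.neg_mulVec, Pi.neg_apply, neg_eq_iff_eq_neg]
        have heq := h2 (Sum.inr b) a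
        rw [Fintype.sum_sum_type] at heq
        have : ((Matrix.fromBlocks (1 : Matrix α α ℝ) (0 : Matrix α γ ℝ) S1 (S2 - 1)).mulVec fun s => P s a) (Sum.inr b)
            = (∑ a', T (Sum.inr b) (Sum.inl a') * P (Sum.inl a') a)
              + (∑ b', T (Sum.inr b) (Sum.inr b') * P (Sum.inr b') a)
              - P (Sum.inr b) a := by
          simp [Matrix.mulVec, dotProduct, Fintype.sum_sum_type,
            Matrix.fromBlocks, hS1, hS2, Matrix.sub_apply, Matrix.one_apply,
            sub_mul, ite_mul, Finset.sum_sub_distrib, Finset.sum_ite_eq]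
          ring
        rw [this, heq]
        simp
    · intro h
      constructor
      · intro a a'
        have := congrFun (h a') (Sum.inl a)
        rw [hM] at this
        simp only [Matrix.neg_mulVec, Pi.neg_apply, neg_inj] at this
        have hcomp : ((Matrix.fromBlocks (1 : Matrix α α ℝ) (0 : Matrix α γ ℝ) S1 (S2 - 1)).mulVec fun s => P s a') (Sum.inl a)
            = P (Sum.inl a) a' := by
          simp [Matrix.mulVec, dotProduct, Fintype.sum_sum_type,
            Matrix.fromBlocks, Matrix.one_apply, ite_mul, Finset.sum_ite_eq]
        rw [hcomp] at this
        simpa using this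
      · intro s a
        cases s with
        | inl a' =>
          rw [Fintype.sum_sum_type]
          simp [habs, ite_mul, Finset.sum_ite_eq]
        | inr b =>
          have := congrFun (h a) (Sum.inr b)
          rw [hM] at this
          simp only [Matrix.neg_mulVec, Pi.neg_apply] at this
          have hcomp : ((Matrix.fromBlocks (1 : Matrix α α ℝ) (0 : Matrix α γ ℝ) S1 (S2 - 1)).mulVec fun s => P s a) (Sum.inr b)
              = (∑ a', T (Sum.inr b) (Sum.inl a') * P (Sum.inl a') a)
                + (∑ b', T (Sum.inr b) (Sum.inr b') * P (Sum.inr b') a)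
                - P (Sum.inr b) a := by
            simp [Matrix.mulVec, dotProduct, Fintype.sum_sum_type,
              Matrix.fromBlocks, hS1, hS2, Matrix.sub_apply, Matrix.one_apply,
              sub_mul, ite_mul, Finset.sum_sub_distrib, Finset.sum_ite_eq]
            ring
          rw [hcomp] at this
          simp at this
          rw [Fintype.sum_sum_type]
          linarith [this]
  -- unique solution of linear systems
  have sol : ∀ (x : (α ⊕ γ) → ℝ) (b : (α ⊕ γ) → ℝ), M.mulVec x = b → x = M⁻¹.mulVec b := by
    intro x b h
    rw [← h, Matrix.mulVec_mulVec, Matrix.nonsing_inv_mul M hU, Matrix.one_mulVec]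
  set P0 : (α ⊕ γ) → α → ℝ := fun s a =>
    (M⁻¹.mulVec fun x => -(if x = Sum.inl a then (1:ℝ) else 0)) s with hP0def
  have hP0 : ∀ a, M.mulVec (fun s => P0 s a) =
      fun x => -(if x = Sum.inl a then (1:ℝ) else 0) := by
    intro a
    show M.mulVec (M⁻¹.mulVec _) = _
    rw [Matrix.mulVec_mulVec, Matrix.mul_nonsing_inv M hU, Matrix.one_mulVec]
  have hP0cond := (key P0).mpr hP0
  refine ⟨⟨P0, hP0cond, ?_⟩, ?_⟩
  · intro Q hQ
    have hQ' := (key Q).mp hQ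
    funext s a
    have h1 := sol (fun s => Q s a) _ (hQ' a)
    have h2 := sol (fun s => P0 s a) _ (hP0 a)
    calc Q s a = (M⁻¹.mulVec fun x => -(if x = Sum.inl a then (1:ℝ) else 0)) s :=
          congrFun h1 s
      _ = P0 s a := (congrFun h2 s).symm
  · intro P hP s a
    have hP' := (key P).mp hP
    have h1 := sol (fun s => P s a) _ (hP' a)
    have h2 : P s a = (M⁻¹.mulVec fun x => -(if x = Sum.inl a then (1:ℝ) else 0)) s :=
      congrFun h1 s
    rw [h2, Matrix.inv_def, Matrix.smul_mulVec,
      ← Matrix.cramer_eq_adjugate_mulVec]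
    have hneg : (fun x => -(if x = Sum.inl a then (1:ℝ) else 0))
        = -(fun x : α ⊕ γ => if x = Sum.inl a then (1:ℝ) else 0) := by
      funext x; simp
    rw [hneg, map_neg]
    simp only [Pi.smul_apply, Pi.neg_apply, Matrix.cramer_apply, smul_eq_mul,
      Ring.inverse_eq_inv']
    rw [neg_div, div_eq_inv_mul]
    ring
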